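/- In the ordinary difference polynomial ring R with g₁ := u₀·u₂ − x·u₁, the polynomial g₅ := u₅ − ((x+3)/(x·(x+1)))·u₀·u₄ belongs to the difference ideal [g₁]. -/

import Mathlib

/-- The ordinary difference polynomial ring `R = ℚ(x){u}`: polynomials in the
variables `u_k = u(x+k)`, `k ∈ ℕ`, over the field `ℚ(x)` of rational functions. -/
noncomputable abbrev ODiffRing := MvPolynomial ℕ (RatFunc ℚ)

/-- The shift endomorphism `σ` of `R` determined by `σ(u_k) = u_{k+1}` together with
the field endomorphism `φ` of `ℚ(x)` (sending `x` to `x+1`) on coefficients. -/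
noncomputable def sigmaO (φ : RatFunc ℚ →+* RatFunc ℚ) : ODiffRing →+* ODiffRing :=
  MvPolynomial.eval₂Hom (MvPolynomial.C.comp φ) fun k => MvPolynomial.X (k + 1)

/-- The difference ideal `[f]` generated by `f ∈ R`: the ideal of `R` generated by
the set `{σ^k(f) : k ∈ ℕ}`. -/
noncomputable def diffIdealO (φ : RatFunc ℚ →+* RatFunc ℚ) (f : ODiffRing) :
    Ideal ODiffRing :=
  Ideal.span { g | ∃ k : ℕ, g = (⇑(sigmaO φ))^[k] f }

/-- `g₁ = u₀·u₂ − x·u₁`. -/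
noncomputable def gOne : ODiffRing :=
  MvPolynomial.X 0 * MvPolynomial.X 2 - MvPolynomial.C RatFunc.X * MvPolynomial.X 1

open MvPolynomial in
theorem sigmaO_iterate_gOne (φ : RatFunc ℚ →+* RatFunc ℚ)
    (hφ : φ RatFunc.X = RatFunc.X + 1) (k : ℕ) :
    (⇑(sigmaO φ))^[k] gOne
      = X k * X (k+2) - C (RatFunc.X + (k : RatFunc ℚ)) * X (k+1) := by
  induction k with
  | zero => simp [gOne]
  | succ n ih =>
    rw [Function.iterate_succ_apply', ih]
    simp only [sigmaO, map_sub, map_mul, eval₂Hom_X', coe_eval₂Hom, eval₂_C, RingHom.comp_apply,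
      map_add, hφ, map_natCast, C_1]
    push_cast
    ring_nf

theorem ratX_add_nat_ne_zero (n : ℕ) : RatFunc.X + (n : RatFunc ℚ) ≠ 0 := by
  have h1 : (RatFunc.X + (n : RatFunc ℚ))
      = algebraMap (Polynomial ℚ) (RatFunc ℚ) (Polynomial.X + (n : Polynomial ℚ)) := by
    rw [map_add, map_natCast, RatFunc.X]
  rw [h1]
  apply RatFunc.algebraMap_ne_zero
  intro h
  have := congrArg (fun p => Polynomial.coeff p 1) h
  simp [Polynomial.coeff_natCast_ite] at this

/-- In the ordinary difference polynomial ring with `g₁ = u₀·u₂ − x·u₁`, the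
polynomial `g₅ = u₅ − ((x+3)/(x·(x+1)))·u₀·u₄` belongs to the difference ideal
`[g₁]`. -/
theorem gFive_mem_diffIdeal (φ : RatFunc ℚ →+* RatFunc ℚ)
    (hφ : φ RatFunc.X = RatFunc.X + 1) :
    (MvPolynomial.X 5
        - MvPolynomial.C ((RatFunc.X + 3) / (RatFunc.X * (RatFunc.X + 1)))
          * (MvPolynomial.X 0 * MvPolynomial.X 4)
      : ODiffRing) ∈ diffIdealO φ gOne := by
  classical
  open MvPolynomial in
  -- notation
  set x : RatFunc ℚ := RatFunc.X with hxdef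
  have hx0 : x ≠ 0 := RatFunc.X_ne_zero
  have hx1 : x + 1 ≠ 0 := by simpa using ratX_add_nat_ne_zero 1
  have hx2 : x + 2 ≠ 0 := by simpa using ratX_add_nat_ne_zero 2
  have hx3 : x + 3 ≠ 0 := by simpa using ratX_add_nat_ne_zero 3
  have hx4 : x + 4 ≠ 0 := by simpa using ratX_add_nat_ne_zero 4
  set d : RatFunc ℚ := x * (x+1) * (x+2) * (x+3) * (x+4) with hddef
  have hd : d ≠ 0 := by
    exact mul_ne_zero (mul_ne_zero (mul_ne_zero (mul_ne_zero hx0 hx1) hx2) hx3) hx4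
  set e : RatFunc ℚ := (x+2) * (x+3)^2 * (x+4) with hedef
  -- the generators
  have hgen : ∀ k : ℕ,
      (X k * X (k+2) - C (x + (k : RatFunc ℚ)) * X (k+1) : ODiffRing)
        ∈ diffIdealO φ gOne := fun k =>
    Ideal.subset_span ⟨k, (sigmaO_iterate_gOne φ hφ k).symm⟩
  have h0 := hgen 0
  have h1 := hgen 1
  have h2 := hgen 2
  have h3 := hgen 3
  have h4 := hgen 4
  push_cast at h0 h1 h2 h3 h4
  simp only [map_add, map_one, map_ofNat, add_zero] at h0 h1 h2 h3 h4
  set y : ODiffRing := C x with hydef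
  -- the scaled combination
  have hP : (C d * X 5 - C e * (X 0 * X 4) : ODiffRing)
      = (-((y+3)*(y+4)) * (X 4 * X 5)) * (X 0 * X 2 - y * X 1)
        + (-(y*(y+4)) * (X 5 * X 5)) * (X 1 * X 3 - (y+1) * X 2)
        + ((y+3)*(y+4) * (X 0 * X 5) - y*(y+1) * (X 5 * X 6))
            * (X 2 * X 4 - (y+2) * X 3)
        + ((y+2)*(y+3)*(y+4) * X 0 - y*(y+1)*(y+2) * X 6 + y*(y+4) * (X 1 * X 5))
            * (X 3 * X 5 - (y+3) * X 4)
        + (-(y*(y+1)*(y+2)*(y+3)) + y*(y+1) * (X 2 * X 5))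
            * (X 4 * X 6 - (y+4) * X 5) := by
    have hCd : (C d : ODiffRing) = y * (y+1) * (y+2) * (y+3) * (y+4) := by
      simp [hddef, map_mul, map_add, map_ofNat, hydef]
    have hCe : (C e : ODiffRing) = (y+2) * (y+3)^2 * (y+4) := by
      simp [hedef, map_mul, map_add, map_ofNat, map_pow, hydef]
    rw [hCd, hCe]; ring
  have hPmem : (C d * X 5 - C e * (X 0 * X 4) : ODiffRing) ∈ diffIdealO φ gOne := by
    rw [hP]
    exact add_mem (add_mem (add_mem (add_mem
      (Ideal.mul_mem_left _ _ h0) (Ideal.mul_mem_left _ _ h1))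
      (Ideal.mul_mem_left _ _ h2)) (Ideal.mul_mem_left _ _ h3))
      (Ideal.mul_mem_left _ _ h4)
  -- relate to the target
  have hinv : d⁻¹ * d = 1 := inv_mul_cancel₀ hd
  have hce : d⁻¹ * e = (x + 3) / (x * (x + 1)) := by
    rw [hddef, hedef]
    field_simp
  have hT : (X 5 - C ((x + 3) / (x * (x + 1))) * (X 0 * X 4) : ODiffRing)
      = C d⁻¹ * (C d * X 5 - C e * (X 0 * X 4)) := by
    have e1 : (C d⁻¹ * (C d * X 5) : ODiffRing) = X 5 := by
      rw [← mul_assoc, ← map_mul, hinv, map_one, one_mul]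
    have e2 : (C d⁻¹ * (C e * (X 0 * X 4)) : ODiffRing)
        = C ((x + 3) / (x * (x + 1))) * (X 0 * X 4) := by
      rw [← mul_assoc, ← map_mul, hce]
    rw [mul_sub, e1, e2]
  rw [hT]
  exact Ideal.mul_mem_left _ _ hPmem
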